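/- There exists an absolute constant C > 0 such that for every n ≥ 1 and every β ≥ C·n^{3/2} there is λ_0 = λ_0(n,β) ≥ 1 with the following property: for every λ ≥ λ_0, the atomic σ-algebras Σ_a = σ⟨A_s : s ≥ 0⟩ and Σ_b = σ⟨B_s : s ≥ 0⟩, with distinguished atoms A_0 and B_0, form an admissible covering of (ℝ^n, ν_β) (note ν_β(ℝ^n) < ∞ since β > n). -/

import Mathlib

open MeasureTheory ENNReal

/-- An atomic σ-subalgebra of the ambient σ-algebra, encoded by the countable
measurable partition of `Ω` into atoms of positive finite measure generating it. -/
structure AtomicPartition {Ω : Type*} {m : MeasurableSpace Ω} (μ : Measure Ω) where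
  ι : Type
  countable : Countable ι
  atom : ι → Set Ω
  measurableSet : ∀ i, MeasurableSet (atom i)
  disjoint : Pairwise (Function.onFun Disjoint atom)
  cover : ⋃ i, atom i = Set.univ
  pos : ∀ i, 0 < μ (atom i)
  lt_top : ∀ i, μ (atom i) < ∞

namespace AtomicPartition

variable {Ω : Type*} {m : MeasurableSpace Ω} {μ : Measure Ω}

/-- The σ-algebra generated by the atoms. -/
def sigma (P : AtomicPartition μ) : MeasurableSpace Ω :=
  MeasurableSpace.generateFrom (Set.range P.atom)

/-- The conditional expectation onto the atomic σ-algebra: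
`E f = ∑_A (μ(A)⁻¹ ∫_A f dμ) · 1_A`. -/
noncomputable def condExp (P : AtomicPartition μ) {E : Type*} [NormedAddCommGroup E]
    [NormedSpace ℝ E] (f : Ω → E) : Ω → E := fun x =>
  ∑' i, Set.indicator (P.atom i)
    (fun _ => (μ (P.atom i)).toReal⁻¹ • ∫ y in P.atom i, f y ∂μ) x

end AtomicPartition

/-- `|R_B|`: the number (in `ℝ≥0∞`) of atoms of `Pa` meeting the atom `Pb.atom j`
in positive measure. -/
noncomputable def rCard {Ω : Type*} {m : MeasurableSpace Ω} (μ : Measure Ω)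
    (Pa Pb : AtomicPartition μ) (j : Pb.ι) : ℝ≥0∞ :=
  ∑' _i : {i : Pa.ι // 0 < μ (Pa.atom i ∩ Pb.atom j)}, 1

/-- `∑_{B ∈ R_A} |R_B| · μ(A∩B)² / (μ(A)μ(B))` for the atom `A = Pa.atom i`
(terms with `μ(A∩B) = 0` vanish, so we may sum over all atoms of `Pb`). -/
noncomputable def atomSum {Ω : Type*} {m : MeasurableSpace Ω} (μ : Measure Ω)
    (Pa Pb : AtomicPartition μ) (i : Pa.ι) : ℝ≥0∞ :=
  ∑' j : Pb.ι, rCard μ Pa Pb j * μ (Pa.atom i ∩ Pb.atom j) ^ 2 /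
    (μ (Pa.atom i) * μ (Pb.atom j))

/-- `Σ_a ∩ Σ_b = {Ω, ∅}` modulo `μ`-null sets. -/
def TrivialIntersection {Ω : Type*} {m : MeasurableSpace Ω} (μ : Measure Ω)
    (ma mb : MeasurableSpace Ω) : Prop :=
  ∀ S T : Set Ω, MeasurableSet[ma] S → MeasurableSet[mb] T →
    μ (symmDiff S T) = 0 → μ S = 0 ∨ μ Sᶜ = 0

/-- `(Σ_a, Σ_b)` is an admissible covering of `(Ω, Σ, μ)` with distinguished atoms
`A0, B0` (which are actual atoms when `μ` is finite, and `∅`, i.e. `none`, when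
`μ(Ω) = ∞`). -/
structure IsAdmissibleCovering {Ω : Type*} {m : MeasurableSpace Ω} (μ : Measure Ω)
    (Pa Pb : AtomicPartition μ) (A0 : Option Pa.ι) (B0 : Option Pb.ι) : Prop where
  trivial_inter : TrivialIntersection μ Pa.sigma Pb.sigma
  infinite_case : μ Set.univ = ∞ → A0 = none ∧ B0 = none
  finite_case : μ Set.univ < ∞ → A0.isSome ∧ B0.isSome
  small : min (⨆ i ∈ {i : Pa.ι | some i ≠ A0}, atomSum μ Pa Pb i)
      (⨆ j ∈ {j : Pb.ι | some j ≠ B0}, atomSum μ Pb Pa j) < 1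

/-- The measure `dν_β(x) = min{1, |x|^{-β}} dx` on `ℝⁿ`. -/
noncomputable def nuMeas (n : ℕ) (β : ℝ) : Measure (EuclideanSpace ℝ (Fin n)) :=
  volume.withDensity fun x => ENNReal.ofReal (min 1 (‖x‖ ^ (-β)))

/-- The cube `Q_s = [-2^s λ, 2^s λ]ⁿ`. -/
def cubeQ (n : ℕ) (lam : ℝ) (s : ℕ) : Set (EuclideanSpace ℝ (Fin n)) :=
  {x | ∀ i, |x i| ≤ 2 ^ s * lam}

/-- The corona atoms `A_0 = Q_0` and `A_s = Q_{2s} ∖ Q_{2s-2}` for `s ≥ 1`. -/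
def Aatom (n : ℕ) (lam : ℝ) : ℕ → Set (EuclideanSpace ℝ (Fin n))
  | 0 => cubeQ n lam 0
  | s + 1 => cubeQ n lam (2 * (s + 1)) \ cubeQ n lam (2 * s)

/-- The corona atoms `B_0 = Q_1` and `B_s = Q_{2s+1} ∖ Q_{2s-1}` for `s ≥ 1`. -/
def Batom (n : ℕ) (lam : ℝ) : ℕ → Set (EuclideanSpace ℝ (Fin n))
  | 0 => cubeQ n lam 1
  | s + 1 => cubeQ n lam (2 * (s + 1) + 1) \ cubeQ n lam (2 * s + 1)


set_option maxHeartbeats 1000000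

namespace St15
open Real Set

variable {n : ℕ} {β lam : ℝ}

lemma measurableSet_cubeQ (n : ℕ) (lam : ℝ) (s : ℕ) : MeasurableSet (cubeQ n lam s) := by
  have h : cubeQ n lam s = ⋂ i, {x : EuclideanSpace ℝ (Fin n) | |x i| ≤ 2 ^ s * lam} := by
    ext x; simp [cubeQ]
  rw [h]
  exact MeasurableSet.iInter fun i =>
    measurableSet_le (((measurable_pi_apply i).comp
      (MeasurableEquiv.toLp 2 (Fin n → ℝ)).symm.measurable).abs) measurable_const

lemma cubeQ_mono (hlam : 0 ≤ lam) {s s' : ℕ} (h : s ≤ s') :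
    cubeQ n lam s ⊆ cubeQ n lam s' := by
  intro x hx i
  exact (hx i).trans (mul_le_mul_of_nonneg_right (pow_le_pow_right₀ one_le_two h) hlam)

lemma volume_box (a b : Fin n → ℝ) :
    volume {x : EuclideanSpace ℝ (Fin n) | ∀ i, x i ∈ Set.Icc (a i) (b i)} =
      ∏ i, ENNReal.ofReal (b i - a i) := by
  have h : {x : EuclideanSpace ℝ (Fin n) | ∀ i, x i ∈ Set.Icc (a i) (b i)} =
      (MeasurableEquiv.toLp 2 (Fin n → ℝ)).symm ⁻¹'
        (Set.univ.pi fun i => Set.Icc (a i) (b i)) := by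
    ext x
    rw [Set.mem_preimage, Set.mem_univ_pi]
    exact Iff.rfl
  rw [h, (EuclideanSpace.volume_preserving_symm_measurableEquiv_toLp (Fin n)).measure_preimage
      (MeasurableSet.univ_pi fun i => measurableSet_Icc).nullMeasurableSet,
    volume_pi_pi]
  simp [Real.volume_Icc]

lemma cubeQ_eq_box (n : ℕ) (lam : ℝ) (s : ℕ) :
    cubeQ n lam s = {x : EuclideanSpace ℝ (Fin n) |
      ∀ i, x i ∈ Set.Icc (-(2 ^ s * lam)) (2 ^ s * lam)} := by
  ext x; simp [cubeQ, abs_le, Set.mem_Icc]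

lemma volume_cubeQ (n : ℕ) (lam : ℝ) (s : ℕ) :
    volume (cubeQ n lam s) = ENNReal.ofReal (2 ^ (s+1) * lam) ^ n := by
  rw [cubeQ_eq_box, volume_box]
  have : (2:ℝ) ^ s * lam - -(2 ^ s * lam) = 2 ^ (s+1) * lam := by ring
  simp [this]

lemma nuMeas_le_volume {S : Set (EuclideanSpace ℝ (Fin n))} (hS : MeasurableSet S) :
    nuMeas n β S ≤ volume S := by
  rw [nuMeas, withDensity_apply _ hS]
  calc ∫⁻ x in S, ENNReal.ofReal (min 1 (‖x‖ ^ (-β))) ∂volume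
      ≤ ∫⁻ _x in S, 1 ∂volume :=
        setLIntegral_mono' hS fun x _ => ENNReal.ofReal_le_one.mpr (min_le_left _ _)
    _ = volume S := by simp

lemma nuMeas_le {S : Set (EuclideanSpace ℝ (Fin n))} (hS : MeasurableSet S) {r : ℝ}
    (hr : 1 ≤ r) (hb : 0 ≤ β) (h : ∀ x ∈ S, r ≤ ‖x‖) :
    nuMeas n β S ≤ ENNReal.ofReal (r ^ (-β)) * volume S := by
  rw [nuMeas, withDensity_apply _ hS]
  calc ∫⁻ x in S, ENNReal.ofReal (min 1 (‖x‖ ^ (-β))) ∂volume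
      ≤ ∫⁻ _x in S, ENNReal.ofReal (r ^ (-β)) ∂volume := by
        refine setLIntegral_mono' hS fun x hx => ENNReal.ofReal_le_ofReal ?_
        exact (min_le_right _ _).trans
          (Real.rpow_le_rpow_of_nonpos (lt_of_lt_of_le one_pos hr) (h x hx) (by linarith))
    _ = ENNReal.ofReal (r ^ (-β)) * volume S := setLIntegral_const _ _

lemma nuMeas_ge {S : Set (EuclideanSpace ℝ (Fin n))} (hS : MeasurableSet S) {r : ℝ}
    (hr : 1 ≤ r) (hb : 0 ≤ β) (h : ∀ x ∈ S, 0 < ‖x‖ ∧ ‖x‖ ≤ r) :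
    ENNReal.ofReal (r ^ (-β)) * volume S ≤ nuMeas n β S := by
  rw [nuMeas, withDensity_apply _ hS, ← setLIntegral_const S (ENNReal.ofReal (r ^ (-β)))]
  refine setLIntegral_mono' hS fun x hx => ENNReal.ofReal_le_ofReal (le_min ?_ ?_)
  · exact Real.rpow_le_one_of_one_le_of_nonpos hr (by linarith)
  · exact Real.rpow_le_rpow_of_nonpos (h x hx).1 (h x hx).2 (by linarith)

lemma abs_apply_le_norm (x : EuclideanSpace ℝ (Fin n)) (i : Fin n) : |x i| ≤ ‖x‖ := by
  rw [EuclideanSpace.norm_eq, ← Real.sqrt_sq_eq_abs]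
  apply Real.sqrt_le_sqrt
  have := Finset.single_le_sum (f := fun j => ‖x j‖ ^ 2)
    (fun j _ => sq_nonneg _) (Finset.mem_univ i)
  simpa [Real.norm_eq_abs, sq_abs] using this




lemma core_ineq {n : ℕ} {β : ℝ} (hn : 1 ≤ n) (hβ : 100 * (n:ℝ) ^ ((3:ℝ)/2) ≤ β)
    {P : ℝ} (hP : 1 ≤ P) :
    P ^ (-β) * (4*P) ^ n ≤ 1/8 * (((5/8)*P) ^ (-β) * (P * (1/(5*(n:ℝ))) / 4) ^ n) := by
  have hn1 : (1:ℝ) ≤ n := by exact_mod_cast hn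
  have hn0 : (0:ℝ) < n := by linarith
  have hs1 : (1:ℝ) ≤ Real.sqrt n := by
    rw [show (1:ℝ) = Real.sqrt 1 by simp]; exact Real.sqrt_le_sqrt hn1
  have hss : Real.sqrt n * Real.sqrt n = n := Real.mul_self_sqrt hn0.le
  have h32 : (n:ℝ) ^ ((3:ℝ)/2) = n * Real.sqrt n := by
    rw [show (3:ℝ)/2 = 1 + 1/2 by norm_num, Real.rpow_add hn0, Real.rpow_one,
      ← Real.sqrt_eq_rpow]
  have hβpos : (0:ℝ) < β := by nlinarith
  have hP0 : (0:ℝ) < P := by linarith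
  have ht0 : (0:ℝ) < 1/(5*(n:ℝ)) := by positivity
  have l8 : Real.log 8 ≤ 7 := by
    have := Real.log_le_sub_one_of_pos (x := 8) (by norm_num); linarith
  have l4 : Real.log 4 ≤ 3 := by
    have := Real.log_le_sub_one_of_pos (x := 4) (by norm_num); linarith
  have l5 : Real.log 5 ≤ 4 := by
    have := Real.log_le_sub_one_of_pos (x := 5) (by norm_num); linarith
  have l85 : 3/8 ≤ Real.log 8 - Real.log 5 := by
    have h := Real.log_le_sub_one_of_pos (x := 5/8) (by norm_num)
    have h2 : Real.log (5/8) = Real.log 5 - Real.log 8 :=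
      Real.log_div (by norm_num) (by norm_num)
    linarith
  have lN : Real.log n ≤ 2*Real.sqrt n - 2 := by
    have h := Real.log_le_sub_one_of_pos (x := Real.sqrt n) (by linarith)
    have h2 : Real.log n = Real.log (Real.sqrt n) + Real.log (Real.sqrt n) := by
      rw [← Real.log_mul (by linarith) (by linarith), hss]
    linarith
  have hL : 0 < P ^ (-β) * (4*P)^n := by positivity
  have hR : 0 < 1/8 * (((5/8)*P) ^ (-β) * (P * (1/(5*(n:ℝ))) / 4) ^ n) := by positivity
  rw [← Real.log_le_log_iff hL hR]
  have lhs_eq : Real.log (P ^ (-β) * (4*P)^n)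
      = -(β * Real.log P) + n * Real.log 4 + n * Real.log P := by
    rw [Real.log_mul (ne_of_gt (Real.rpow_pos_of_pos hP0 _)) (by positivity),
      Real.log_rpow hP0, Real.log_pow,
      Real.log_mul (by norm_num : (4:ℝ) ≠ 0) hP0.ne']
    ring
  have rhs_eq : Real.log (1/8 * (((5/8)*P) ^ (-β) * (P * (1/(5*(n:ℝ))) / 4) ^ n))
      = -Real.log 8 - β * Real.log 5 + β * Real.log 8 - β * Real.log P
        + n * Real.log P - n * Real.log 5 - n * Real.log n - n * Real.log 4 := by
    rw [Real.log_mul (by norm_num : (1/8:ℝ) ≠ 0) (by positivity),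
      Real.log_mul (ne_of_gt (Real.rpow_pos_of_pos (by positivity) _)) (by positivity),
      Real.log_rpow (by positivity : (0:ℝ) < (5/8)*P), Real.log_pow,
      Real.log_mul (by norm_num : (5/8:ℝ) ≠ 0) hP0.ne',
      show Real.log (5/8) = Real.log 5 - Real.log 8 from
        Real.log_div (by norm_num) (by norm_num),
      Real.log_div (by positivity) (by norm_num : (4:ℝ) ≠ 0),
      Real.log_mul hP0.ne' ht0.ne',
      show (1:ℝ)/(5*(n:ℝ)) = ((5:ℝ)*(n:ℝ))⁻¹ from one_div _,
      Real.log_inv,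
      Real.log_mul (by norm_num : (5:ℝ) ≠ 0) hn0.ne',
      show Real.log (1/8) = -Real.log 8 by
        rw [show (1:ℝ)/8 = (8:ℝ)⁻¹ from one_div _, Real.log_inv]]
    ring
  rw [lhs_eq, rhs_eq]
  have e1 : (3:ℝ)/8 * β ≤ β * Real.log 8 - β * Real.log 5 := by
    have h := mul_le_mul_of_nonneg_left l85 hβpos.le
    have hr : β * (Real.log 8 - Real.log 5) = β * Real.log 8 - β * Real.log 5 := by ring
    linarith
  have e2 : (n:ℝ) * Real.log n ≤ 2*((n:ℝ)*Real.sqrt n) - 2*n := by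
    have h := mul_le_mul_of_nonneg_left lN hn0.le
    have hr : (n:ℝ) * (2*Real.sqrt n - 2) = 2*((n:ℝ)*Real.sqrt n) - 2*n := by ring
    linarith
  have e3 : (n:ℝ) * Real.log 5 ≤ 4*n := by
    have h := mul_le_mul_of_nonneg_left l5 hn0.le
    linarith
  have e4 : (n:ℝ) * Real.log 4 ≤ 3*n := by
    have h := mul_le_mul_of_nonneg_left l4 hn0.le
    linarith
  have e5 : (n:ℝ) ≤ (n:ℝ) * Real.sqrt n := by
    have h := mul_le_mul_of_nonneg_left hs1 hn0.le
    have hr : (n:ℝ) * 1 = (n:ℝ) := by ring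
    linarith
  have e6 : 100 * ((n:ℝ) * Real.sqrt n) ≤ β := by rw [← h32]; exact hβ
  have e7 : (1:ℝ) ≤ (n:ℝ) * Real.sqrt n := by linarith
  linarith

def shellS (n : ℕ) (lam : ℝ) : ℕ → Set (EuclideanSpace ℝ (Fin n))
  | 0 => cubeQ n lam 0
  | s + 1 => cubeQ n lam (s+1) \ cubeQ n lam s

lemma measurableSet_shellS (n : ℕ) (lam : ℝ) (s : ℕ) : MeasurableSet (shellS n lam s) := by
  cases s with
  | zero => exact measurableSet_cubeQ n lam 0
  | succ s => exact (measurableSet_cubeQ n lam (s+1)).diff (measurableSet_cubeQ n lam s)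

lemma shellS_subset (n : ℕ) (lam : ℝ) (s : ℕ) : shellS n lam s ⊆ cubeQ n lam s := by
  cases s with
  | zero => exact subset_rfl
  | succ s => exact Set.diff_subset

lemma one_le_P (hlam : 2 ≤ lam) (s : ℕ) : (1:ℝ) ≤ 2 ^ s * lam := by
  have h2s : (1:ℝ) ≤ 2 ^ s := one_le_pow₀ one_le_two
  nlinarith

lemma two_le_P (hlam : 2 ≤ lam) (s : ℕ) : (2:ℝ) ≤ 2 ^ s * lam := by
  have h2s : (1:ℝ) ≤ 2 ^ s := one_le_pow₀ one_le_two
  nlinarith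

lemma shell_upper (hlam : 2 ≤ lam) (hb0 : 0 ≤ β) (s : ℕ) :
    nuMeas n β (shellS n lam (s+1)) ≤
      ENNReal.ofReal ((2^s*lam) ^ (-β)) * ENNReal.ofReal (4*(2^s*lam)) ^ n := by
  have h1 : (1:ℝ) ≤ 2^s*lam := one_le_P hlam s
  have h := nuMeas_le (measurableSet_shellS n lam (s+1)) h1 hb0 (fun x hx => by
    obtain ⟨hx1, hx2⟩ := hx
    simp only [cubeQ, Set.mem_setOf_eq, not_forall] at hx2
    obtain ⟨i, hi⟩ := hx2
    push_neg at hi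
    exact le_of_lt (hi.trans_le (abs_apply_le_norm x i)))
  refine h.trans (mul_le_mul_right ?_ _)
  calc volume (shellS n lam (s+1)) ≤ volume (cubeQ n lam (s+1)) :=
        measure_mono (shellS_subset n lam (s+1))
    _ = ENNReal.ofReal (2 ^ (s+2) * lam) ^ n := volume_cubeQ n lam (s+1)
    _ = ENNReal.ofReal (4*(2^s*lam)) ^ n := by rw [show (2:ℝ)^(s+2)*lam = 4*(2^s*lam) by ring]

lemma shell_lower (hn : 1 ≤ n) (hlam : 2 ≤ lam) (hb0 : 0 ≤ β) (s : ℕ) :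
    ENNReal.ofReal (((5/8)*(2^s*lam)) ^ (-β)) *
        ENNReal.ofReal ((2^s*lam) * (1/(5*(n:ℝ))) / 4) ^ n
      ≤ nuMeas n β (shellS n lam s) := by
  have hn1 : (1:ℝ) ≤ (n:ℝ) := by exact_mod_cast hn
  set P : ℝ := 2^s*lam with hPdef
  have hP2 : (2:ℝ) ≤ P := two_le_P hlam s
  set c : ℝ := P/2 with hcdef
  have hc1 : (1:ℝ) ≤ c := by simp only [hcdef]; linarith
  set t : ℝ := 1/(5*(n:ℝ)) with htdef
  have ht0 : (0:ℝ) < t := by positivity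
  have hnt : (n:ℝ) * t = 1/5 := by rw [htdef, mul_one_div, div_eq_iff (by positivity)]; ring
  have ht5 : t ≤ 1/5 := by
    rw [htdef]; rw [div_le_div_iff₀ (by positivity) (by norm_num)]; nlinarith
  have i0 : Fin n := ⟨0, hn⟩
  set a : Fin n → ℝ := fun i => if i = i0 then c*(1+t/2) else 0 with hadef
  set b : Fin n → ℝ := fun i => if i = i0 then c*(1+t) else c*(t/2) with hbdef
  set R : Set (EuclideanSpace ℝ (Fin n)) :=
    {x | ∀ i, x i ∈ Set.Icc (a i) (b i)} with hRdef
  have hRmeas : MeasurableSet R := by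
    have h : R = ⋂ i, (fun x : EuclideanSpace ℝ (Fin n) => x i) ⁻¹' Set.Icc (a i) (b i) := by
      ext x; simp [hRdef]
    rw [h]
    exact MeasurableSet.iInter fun i =>
      ((measurable_pi_apply i).comp
        (MeasurableEquiv.toLp 2 (Fin n → ℝ)).symm.measurable) measurableSet_Icc
  -- membership facts
  have hmem : ∀ x ∈ R, (c*(1+t/2) ≤ x i0 ∧ x i0 ≤ c*(1+t)) ∧
      ∀ i, i ≠ i0 → (0 ≤ x i ∧ x i ≤ c*(t/2)) := by
    intro x hx
    refine ⟨?_, fun i hi => ?_⟩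
    · have := hx i0; simpa [hadef, hbdef] using this
    · have := hx i; simpa [hadef, hbdef, hi] using this
  have hRQ : R ⊆ cubeQ n lam s := by
    intro x hx i
    obtain ⟨h0, hrest⟩ := hmem x hx
    have hPc : (2:ℝ)^s*lam = 2*c := by rw [hcdef, hPdef]; ring
    by_cases hi : i = i0
    · subst hi
      rw [abs_le]
      constructor <;> nlinarith [h0.1, h0.2]
    · obtain ⟨hl, hr⟩ := hrest i hi
      rw [abs_le]
      constructor <;> nlinarith
  have hRshell : R ⊆ shellS n lam s := by
    cases s with
    | zero => exact hRQ
    | succ s' =>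
      intro x hx
      refine ⟨hRQ hx, ?_⟩
      intro hx'
      obtain ⟨h0, _⟩ := hmem x hx
      have := hx' i0
      have hcs : (2:ℝ)^s'*lam = c := by
        simp only [hcdef, hPdef]; ring
      rw [hcs] at this
      have : x i0 ≤ c := (abs_le.mp this).2
      nlinarith [h0.1]
  have hnorm : ∀ x ∈ R, 0 < ‖x‖ ∧ ‖x‖ ≤ (5/8)*P := by
    intro x hx
    obtain ⟨h0, hrest⟩ := hmem x hx
    constructor
    · have h1 : c*(1+t/2) ≤ |x i0| := by
        rw [abs_of_nonneg (by nlinarith [h0.1])]; exact h0.1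
      have := abs_apply_le_norm x i0
      nlinarith
    · have hsum : ∑ i, ‖x i‖^2 ≤ ((5/8)*P)^2 := by
        have key : ∑ i, ‖x i‖^2 =
            ‖x i0‖^2 + ∑ i ∈ Finset.univ.erase i0, ‖x i‖^2 :=
          (Finset.add_sum_erase _ _ (Finset.mem_univ i0)).symm
        have h1 : ‖x i0‖^2 ≤ (c*(1+t))^2 := by
          rw [Real.norm_eq_abs, sq_abs]
          nlinarith [h0.1, h0.2]
        have h2 : ∑ i ∈ Finset.univ.erase i0, ‖x i‖^2 ≤ (n:ℝ) * (c*(t/2))^2 := by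
          calc ∑ i ∈ Finset.univ.erase i0, ‖x i‖^2
              ≤ ∑ _i ∈ Finset.univ.erase i0, (c*(t/2))^2 := by
                refine Finset.sum_le_sum fun i hi => ?_
                have hi' : i ≠ i0 := Finset.ne_of_mem_erase hi
                obtain ⟨hl, hr⟩ := hrest i hi'
                rw [Real.norm_eq_abs, sq_abs]
                nlinarith
            _ = ((Finset.univ.erase i0).card : ℝ) * (c*(t/2))^2 := by
                rw [Finset.sum_const, nsmul_eq_mul]
            _ ≤ (n:ℝ) * (c*(t/2))^2 := by
                have hcard : (Finset.univ.erase i0).card ≤ n := by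
                  calc (Finset.univ.erase i0).card ≤ Finset.univ.card :=
                        Finset.card_erase_le.trans le_rfl
                    _ = n := by simp
                have : ((Finset.univ.erase i0).card : ℝ) ≤ (n:ℝ) := by exact_mod_cast hcard
                nlinarith
        -- (c(1+t))^2 + n (ct/2)^2 ≤ (5/4 c)^2 = (5/8 P)^2
        have hP2c : (5/8)*P = (5/4)*c := by rw [hcdef]; ring
        rw [hP2c]
        have hnt2 : (n:ℝ)*(t^2) = t/5 := by
          have : (n:ℝ)*(t^2) = ((n:ℝ)*t)*t := by ring
          rw [this, hnt]; ring
        nlinarith [h1, h2, key, hnt2, ht0, ht5, hc1]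
      rw [EuclideanSpace.norm_eq]
      have h58 : (0:ℝ) ≤ (5/8)*P := by nlinarith
      calc Real.sqrt (∑ i, ‖x i‖^2) ≤ Real.sqrt (((5/8)*P)^2) := Real.sqrt_le_sqrt hsum
        _ = (5/8)*P := Real.sqrt_sq h58
  have hr1 : (1:ℝ) ≤ (5/8)*P := by nlinarith
  have hvol : volume R = ENNReal.ofReal (P * t / 4) ^ n := by
    rw [hRdef, volume_box]
    have hlen : ∀ i : Fin n, b i - a i = P * t / 4 := by
      intro i
      by_cases hi : i = i0 <;> simp [hadef, hbdef, hi, hcdef] <;> ring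
    calc ∏ i, ENNReal.ofReal (b i - a i)
        = ∏ _i : Fin n, ENNReal.ofReal (P * t / 4) := by
          exact Finset.prod_congr rfl (fun i _ => by rw [hlen i])
      _ = ENNReal.ofReal (P * t / 4) ^ n := by
          rw [Finset.prod_const]; simp
  calc ENNReal.ofReal (((5/8)*P) ^ (-β)) * ENNReal.ofReal (P * t / 4) ^ n
      = ENNReal.ofReal (((5/8)*P) ^ (-β)) * volume R := by rw [hvol]
    _ ≤ nuMeas n β R := nuMeas_ge hRmeas hr1 hb0 hnorm
    _ ≤ nuMeas n β (shellS n lam s) := measure_mono hRshell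

lemma beta_pos (hn : 1 ≤ n) (hb : 100 * (n:ℝ) ^ ((3:ℝ)/2) ≤ β) : (0:ℝ) < β := by
  have hn1 : (1:ℝ) ≤ (n:ℝ) := by exact_mod_cast hn
  have : (1:ℝ) ≤ (n:ℝ) ^ ((3:ℝ)/2) := Real.one_le_rpow hn1 (by norm_num)
  linarith

lemma shell_ratio (hn : 1 ≤ n) (hb : 100 * (n:ℝ) ^ ((3:ℝ)/2) ≤ β) (hlam : 2 ≤ lam) (s : ℕ) :
    nuMeas n β (shellS n lam (s+1)) ≤ ENNReal.ofReal (1/8) * nuMeas n β (shellS n lam s) := by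
  have hb0 : (0:ℝ) ≤ β := (beta_pos hn hb).le
  have hP1 : (1:ℝ) ≤ 2^s*lam := one_le_P hlam s
  have hP0 : (0:ℝ) < 2^s*lam := by linarith
  calc nuMeas n β (shellS n lam (s+1))
      ≤ ENNReal.ofReal ((2^s*lam) ^ (-β)) * ENNReal.ofReal (4*(2^s*lam)) ^ n :=
        shell_upper hlam hb0 s
    _ = ENNReal.ofReal ((2^s*lam) ^ (-β) * (4*(2^s*lam)) ^ n) := by
        rw [ENNReal.ofReal_mul (Real.rpow_nonneg hP0.le _), ENNReal.ofReal_pow (by positivity)]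
    _ ≤ ENNReal.ofReal (1/8 * ((((5/8)*(2^s*lam)) ^ (-β)) *
          ((2^s*lam) * (1/(5*(n:ℝ))) / 4) ^ n)) :=
        ENNReal.ofReal_le_ofReal (core_ineq hn hb hP1)
    _ = ENNReal.ofReal (1/8) * (ENNReal.ofReal (((5/8)*(2^s*lam)) ^ (-β)) *
          ENNReal.ofReal ((2^s*lam) * (1/(5*(n:ℝ))) / 4) ^ n) := by
        rw [ENNReal.ofReal_mul (by norm_num),
          ENNReal.ofReal_mul (Real.rpow_nonneg (by positivity) _),
          ENNReal.ofReal_pow (by positivity)]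
    _ ≤ ENNReal.ofReal (1/8) * nuMeas n β (shellS n lam s) :=
        mul_le_mul_right (shell_lower hn hlam hb0 s) _

lemma nuMeas_cubeQ_lt_top (n : ℕ) (β lam : ℝ) (s : ℕ) : nuMeas n β (cubeQ n lam s) < ⊤ :=
  lt_of_le_of_lt (nuMeas_le_volume (measurableSet_cubeQ n lam s))
    (by rw [volume_cubeQ]; exact ENNReal.pow_lt_top ENNReal.ofReal_lt_top)

lemma m_ne_top (s : ℕ) : nuMeas n β (shellS n lam s) ≠ ⊤ :=
  ((measure_mono (shellS_subset n lam s)).trans_lt (nuMeas_cubeQ_lt_top n β lam s)).ne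

lemma m_pos (hn : 1 ≤ n) (hlam : 2 ≤ lam) (hb0 : 0 ≤ β) (s : ℕ) :
    0 < nuMeas n β (shellS n lam s) := by
  have hP1 : (1:ℝ) ≤ 2^s*lam := one_le_P hlam s
  have hP0 : (0:ℝ) < 2^s*lam := by linarith
  have hn0 : (0:ℝ) < (n:ℝ) := by exact_mod_cast hn
  have h1 : 0 < ENNReal.ofReal (((5/8)*(2^s*lam)) ^ (-β)) :=
    ENNReal.ofReal_pos.mpr (Real.rpow_pos_of_pos (by nlinarith) _)
  have h2 : ENNReal.ofReal ((2^s*lam) * (1/(5*(n:ℝ))) / 4) ^ n ≠ 0 := by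
    apply pow_ne_zero
    apply (ENNReal.ofReal_pos.mpr ?_).ne'
    have h5 : (0:ℝ) < 1/(5*(n:ℝ)) := by positivity
    positivity
  exact lt_of_lt_of_le (ENNReal.mul_pos h1.ne' h2) (shell_lower hn hlam hb0 s)

lemma m_geo (hn : 1 ≤ n) (hb : 100 * (n:ℝ) ^ ((3:ℝ)/2) ≤ β) (hlam : 2 ≤ lam) (s : ℕ) :
    nuMeas n β (shellS n lam s) ≤
      (ENNReal.ofReal (1/8))^s * nuMeas n β (shellS n lam 0) := by
  induction s with
  | zero => simp
  | succ s ih =>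
    calc nuMeas n β (shellS n lam (s+1))
        ≤ ENNReal.ofReal (1/8) * nuMeas n β (shellS n lam s) := shell_ratio hn hb hlam s
      _ ≤ ENNReal.ofReal (1/8) * ((ENNReal.ofReal (1/8))^s * nuMeas n β (shellS n lam 0)) :=
          mul_le_mul_right ih _
      _ = (ENNReal.ofReal (1/8))^(s+1) * nuMeas n β (shellS n lam 0) := by
          rw [pow_succ]; ring

lemma exists_mem_cubeQ (hlam : 2 ≤ lam) (x : EuclideanSpace ℝ (Fin n)) :
    ∃ s, x ∈ cubeQ n lam s := by
  obtain ⟨s, hs⟩ := pow_unbounded_of_one_lt ‖x‖ (one_lt_two (α := ℝ))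
  refine ⟨s, fun i => (abs_apply_le_norm x i).trans (le_of_lt (hs.trans_le ?_))⟩
  have h2s : (0:ℝ) < 2 ^ s := by positivity
  nlinarith

lemma exists_shell_of_mem (s : ℕ) :
    ∀ x, x ∈ cubeQ n lam s → ∃ u, x ∈ shellS n lam u := by
  induction s with
  | zero => exact fun x hx => ⟨0, hx⟩
  | succ s ih =>
    intro x hx
    by_cases h : x ∈ cubeQ n lam s
    · exact ih x h
    · exact ⟨s+1, hx, h⟩

lemma iUnion_shellS (hlam : 2 ≤ lam) : (⋃ u, shellS n lam u) = Set.univ := by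
  apply Set.eq_univ_of_forall
  intro x
  obtain ⟨s, hs⟩ := exists_mem_cubeQ hlam x
  obtain ⟨u, hu⟩ := exists_shell_of_mem s x hs
  exact Set.mem_iUnion.mpr ⟨u, hu⟩

lemma nuMeas_univ_lt_top (hn : 1 ≤ n) (hb : 100 * (n:ℝ) ^ ((3:ℝ)/2) ≤ β) (hlam : 2 ≤ lam) :
    nuMeas n β Set.univ < ⊤ := by
  rw [← iUnion_shellS (n := n) hlam]
  have h1 : nuMeas n β (⋃ u, shellS n lam u) ≤ ∑' u, nuMeas n β (shellS n lam u) :=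
    measure_iUnion_le _
  have h2 : ∑' u, nuMeas n β (shellS n lam u) ≤
      ∑' u, (ENNReal.ofReal (1/8))^u * nuMeas n β (shellS n lam 0) :=
    ENNReal.tsum_le_tsum fun u => m_geo hn hb hlam u
  rw [ENNReal.tsum_mul_right, ENNReal.tsum_geometric] at h2
  have hlt1 : ENNReal.ofReal (1/8) < 1 := by
    rw [show (1:ℝ≥0∞) = ENNReal.ofReal 1 by simp]
    exact (ENNReal.ofReal_lt_ofReal_iff (by norm_num)).mpr (by norm_num)
  have hne : (1 - ENNReal.ofReal (1/8))⁻¹ ≠ ⊤ :=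
    ENNReal.inv_ne_top.mpr (by rwa [ne_eq, tsub_eq_zero_iff_le, not_le])
  exact lt_of_le_of_lt (h1.trans h2)
    (ENNReal.mul_lt_top hne.lt_top (m_ne_top 0).lt_top)

-- Structure of A and B atoms
lemma Aatom_subset_cubeQ (k : ℕ) : Aatom n lam k ⊆ cubeQ n lam (2*k) := by
  cases k with
  | zero => exact subset_rfl
  | succ k => exact Set.diff_subset

lemma Batom_subset_cubeQ (k : ℕ) : Batom n lam k ⊆ cubeQ n lam (2*k+1) := by
  cases k with
  | zero => exact subset_rfl
  | succ k => exact Set.diff_subset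

lemma Aatom_disjoint_cubeQ (k : ℕ) : Disjoint (Aatom n lam (k+1)) (cubeQ n lam (2*k)) := by
  rw [Set.disjoint_left]
  intro x hx hx'
  exact hx.2 hx'

lemma Batom_disjoint_cubeQ (k : ℕ) : Disjoint (Batom n lam (k+1)) (cubeQ n lam (2*k+1)) := by
  rw [Set.disjoint_left]
  intro x hx hx'
  exact hx.2 hx'

lemma Aatom_pairwise (hlam : 2 ≤ lam) :
    Pairwise (Function.onFun Disjoint (Aatom n lam)) := by
  have hlam0 : (0:ℝ) ≤ lam := by linarith
  have key : ∀ i j, i < j → Disjoint (Aatom n lam i) (Aatom n lam j) := by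
    intro i j hij
    obtain ⟨j', rfl⟩ := Nat.exists_eq_succ_of_ne_zero (by omega : j ≠ 0)
    refine Set.disjoint_left.mpr fun x hxi hxj => ?_
    exact hxj.2 (cubeQ_mono hlam0 (by omega) (Aatom_subset_cubeQ i hxi))
  intro i j hne
  rcases hne.lt_or_gt with h | h
  · exact key i j h
  · exact (key j i h).symm

lemma Batom_pairwise (hlam : 2 ≤ lam) :
    Pairwise (Function.onFun Disjoint (Batom n lam)) := by
  have hlam0 : (0:ℝ) ≤ lam := by linarith
  have key : ∀ i j, i < j → Disjoint (Batom n lam i) (Batom n lam j) := by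
    intro i j hij
    obtain ⟨j', rfl⟩ := Nat.exists_eq_succ_of_ne_zero (by omega : j ≠ 0)
    refine Set.disjoint_left.mpr fun x hxi hxj => ?_
    exact hxj.2 (cubeQ_mono hlam0 (by omega) (Batom_subset_cubeQ i hxi))
  intro i j hne
  rcases hne.lt_or_gt with h | h
  · exact key i j h
  · exact (key j i h).symm

lemma Aatom_cover (hlam : 2 ≤ lam) : (⋃ i, Aatom n lam i) = Set.univ := by
  apply Set.eq_univ_of_forall
  intro x
  have hlam0 : (0:ℝ) ≤ lam := by linarith
  obtain ⟨s, hs⟩ := exists_mem_cubeQ hlam x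
  have hs2 : x ∈ cubeQ n lam (2*s) := cubeQ_mono hlam0 (by omega) hs
  clear hs
  rw [Set.mem_iUnion]
  induction s with
  | zero => exact ⟨0, hs2⟩
  | succ s ih =>
    by_cases h : x ∈ cubeQ n lam (2*s)
    · exact ih h
    · exact ⟨s+1, hs2, h⟩

lemma Batom_cover (hlam : 2 ≤ lam) : (⋃ i, Batom n lam i) = Set.univ := by
  apply Set.eq_univ_of_forall
  intro x
  have hlam0 : (0:ℝ) ≤ lam := by linarith
  obtain ⟨s, hs⟩ := exists_mem_cubeQ hlam x
  have hs2 : x ∈ cubeQ n lam (2*s+1) := cubeQ_mono hlam0 (by omega) hs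
  clear hs
  rw [Set.mem_iUnion]
  induction s with
  | zero => exact ⟨0, hs2⟩
  | succ s ih =>
    by_cases h : x ∈ cubeQ n lam (2*s+1)
    · exact ih h
    · exact ⟨s+1, hs2, h⟩

-- shell inclusions in atoms and intersections
lemma shell_subset_Aatom (hlam : 2 ≤ lam) (k : ℕ) :
    shellS n lam (2*k) ⊆ Aatom n lam k := by
  have hlam0 : (0:ℝ) ≤ lam := by linarith
  cases k with
  | zero => exact subset_rfl
  | succ k =>
    intro x hx
    have hx' : x ∈ cubeQ n lam (2*k+2) \ cubeQ n lam (2*k+1) := hx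
    exact ⟨hx'.1, fun h => hx'.2 (cubeQ_mono hlam0 (by omega) h)⟩

lemma shell_subset_Batom (hlam : 2 ≤ lam) (k : ℕ) :
    shellS n lam (2*k) ⊆ Batom n lam k := by
  have hlam0 : (0:ℝ) ≤ lam := by linarith
  cases k with
  | zero => exact cubeQ_mono hlam0 (by omega)
  | succ k =>
    intro x hx
    have hx' : x ∈ cubeQ n lam (2*k+2) \ cubeQ n lam (2*k+1) := hx
    exact ⟨cubeQ_mono hlam0 (by omega) hx'.1, hx'.2⟩

lemma shell_subset_Aatom_succ (hlam : 2 ≤ lam) (k : ℕ) :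
    shellS n lam (2*k+1) ⊆ Aatom n lam (k+1) := by
  have hlam0 : (0:ℝ) ≤ lam := by linarith
  intro x hx
  have hx' : x ∈ cubeQ n lam (2*k+1) \ cubeQ n lam (2*k) := hx
  exact ⟨cubeQ_mono hlam0 (by omega) hx'.1, hx'.2⟩

lemma shell_subset_Batom' (hlam : 2 ≤ lam) (k : ℕ) :
    shellS n lam (2*k+1) ⊆ Batom n lam k := by
  have hlam0 : (0:ℝ) ≤ lam := by linarith
  cases k with
  | zero => intro x hx; exact (hx : x ∈ cubeQ n lam 1 \ cubeQ n lam 0).1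
  | succ k =>
    intro x hx
    have hx' : x ∈ cubeQ n lam (2*k+3) \ cubeQ n lam (2*k+2) := hx
    exact ⟨hx'.1, fun h => hx'.2 (cubeQ_mono hlam0 (by omega) h)⟩

lemma inter_subset_shell_left (hlam : 2 ≤ lam) (k : ℕ) :
    Aatom n lam (k+1) ∩ Batom n lam k ⊆ shellS n lam (2*k+1) := by
  have hlam0 : (0:ℝ) ≤ lam := by linarith
  intro x ⟨hA, hB⟩
  have hB' : x ∈ cubeQ n lam (2*k+1) := Batom_subset_cubeQ k hB
  exact ⟨hB', hA.2⟩

lemma inter_subset_shell_right (hlam : 2 ≤ lam) (k : ℕ) :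
    Aatom n lam (k+1) ∩ Batom n lam (k+1) ⊆ shellS n lam (2*k+2) := by
  intro x ⟨hA, hB⟩
  exact ⟨hA.1, hB.2⟩

lemma AB_empty (hlam : 2 ≤ lam) (k j : ℕ) (h1 : j ≠ k) (h2 : j ≠ k+1) :
    Aatom n lam (k+1) ∩ Batom n lam j = ∅ := by
  have hlam0 : (0:ℝ) ≤ lam := by linarith
  apply Set.eq_empty_iff_forall_notMem.mpr
  rintro x ⟨hA, hB⟩
  rcases Nat.lt_or_ge j k with h | h
  · exact hA.2 (cubeQ_mono hlam0 (by omega) (Batom_subset_cubeQ j hB))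
  · have hj : k + 2 ≤ j := by omega
    obtain ⟨j', rfl⟩ := Nat.exists_eq_succ_of_ne_zero (by omega : j ≠ 0)
    exact hB.2 (cubeQ_mono hlam0 (by omega) hA.1)

lemma A0B_empty (hlam : 2 ≤ lam) (j : ℕ) (h : j ≠ 0) :
    Aatom n lam 0 ∩ Batom n lam j = ∅ := by
  have hlam0 : (0:ℝ) ≤ lam := by linarith
  apply Set.eq_empty_iff_forall_notMem.mpr
  rintro x ⟨hA, hB⟩
  obtain ⟨j', rfl⟩ := Nat.exists_eq_succ_of_ne_zero h
  exact hB.2 (cubeQ_mono hlam0 (by omega) hA)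

lemma measurableSet_Aatom (n : ℕ) (lam : ℝ) (k : ℕ) : MeasurableSet (Aatom n lam k) := by
  cases k with
  | zero => exact measurableSet_cubeQ n lam 0
  | succ k => exact (measurableSet_cubeQ n lam _).diff (measurableSet_cubeQ n lam _)

lemma measurableSet_Batom (n : ℕ) (lam : ℝ) (k : ℕ) : MeasurableSet (Batom n lam k) := by
  cases k with
  | zero => exact measurableSet_cubeQ n lam 1
  | succ k => exact (measurableSet_cubeQ n lam _).diff (measurableSet_cubeQ n lam _)

lemma mem_partition_sigma {Ω : Type*} {f : ℕ → Set Ω}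
    (hd : Pairwise (Function.onFun Disjoint f)) (hc : (⋃ i, f i) = Set.univ)
    {S : Set Ω} (hS : MeasurableSet[MeasurableSpace.generateFrom (Set.range f)] S) :
    ∃ I : Set ℕ, S = ⋃ i ∈ I, f i := by
  let m' : MeasurableSpace Ω :=
    { MeasurableSet' := fun S => ∃ I : Set ℕ, S = ⋃ i ∈ I, f i
      measurableSet_empty := ⟨∅, by simp⟩
      measurableSet_compl := by
        rintro S ⟨I, rfl⟩
        refine ⟨Iᶜ, ?_⟩
        ext x
        have hcov : ∃ i, x ∈ f i := Set.mem_iUnion.mp (hc ▸ Set.mem_univ x)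
        obtain ⟨i, hi⟩ := hcov
        simp only [Set.mem_compl_iff, Set.mem_iUnion, exists_prop, not_exists, not_and]
        constructor
        · intro h
          exact ⟨i, fun hI => h i hI hi, hi⟩
        · rintro ⟨i', hi'I, hxi'⟩ j hjI hxj
          have hne : j ≠ i' := fun h => hi'I (h ▸ hjI)
          exact Set.disjoint_left.mp (hd hne) hxj hxi'
      measurableSet_iUnion := by
        intro g hg
        choose I hI using hg
        refine ⟨⋃ k, I k, ?_⟩
        calc (⋃ k, g k) = ⋃ k, ⋃ i ∈ I k, f i := Set.iUnion_congr hI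
          _ = ⋃ i ∈ ⋃ k, I k, f i := (Set.biUnion_iUnion _ _).symm }
  have hle : MeasurableSpace.generateFrom (Set.range f) ≤ m' := by
    apply MeasurableSpace.generateFrom_le
    rintro t ⟨i, rfl⟩
    exact ⟨{i}, by simp⟩
  exact hle S hS

lemma rcard_aux {p : ℕ → Prop} {j : ℕ} (h : ∀ i, p i → i = j ∨ i = j+1) :
    (∑' _i : {i : ℕ // p i}, (1:ℝ≥0∞)) ≤ 2 := by
  have hmap : ∀ i : {i : ℕ // p i}, (i : ℕ) ∈ ({j, j+1} : Finset ℕ) := by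
    rintro ⟨i, hi⟩
    rcases h i hi with h' | h' <;> simp [h']
  have hinj : Function.Injective
      (fun i : {i : ℕ // p i} => (⟨(i : ℕ), hmap i⟩ : {x // x ∈ ({j, j+1} : Finset ℕ)})) := by
    intro a b hab
    simp only [Subtype.mk.injEq] at hab
    exact Subtype.ext hab
  calc (∑' _i : {i : ℕ // p i}, (1:ℝ≥0∞))
      ≤ ∑' _x : {x // x ∈ ({j, j+1} : Finset ℕ)}, (1:ℝ≥0∞) :=
        Summable.tsum_le_tsum_of_inj (g := fun _ : {x // x ∈ ({j, j+1} : Finset ℕ)} => (1:ℝ≥0∞))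
          (f := fun _ : {i : ℕ // p i} => (1:ℝ≥0∞)) _ hinj (fun _ _ => zero_le)
          (fun _ => le_rfl) ENNReal.summable ENNReal.summable
    _ = ∑ x ∈ ({j, j+1} : Finset ℕ), (1:ℝ≥0∞) :=
        Finset.tsum_subtype ({j, j+1} : Finset ℕ) (fun _ => (1:ℝ≥0∞))
    _ = 2 := by
        rw [Finset.sum_pair (by omega : j ≠ j+1)]
        norm_num

lemma trivial_inter_main (hn : 1 ≤ n) (hb : 100 * (n:ℝ) ^ ((3:ℝ)/2) ≤ β) (hlam : 2 ≤ lam) :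
    TrivialIntersection (nuMeas n β)
      (MeasurableSpace.generateFrom (Set.range (Aatom n lam)))
      (MeasurableSpace.generateFrom (Set.range (Batom n lam))) := by
  intro S T hS hT hnull
  obtain ⟨I, rfl⟩ := mem_partition_sigma (Aatom_pairwise hlam) (Aatom_cover hlam) hS
  obtain ⟨J, rfl⟩ := mem_partition_sigma (Batom_pairwise hlam) (Batom_cover hlam) hT
  have hb0 : (0:ℝ) ≤ β := (beta_pos hn hb).le
  have posAB : ∀ k, 0 < nuMeas n β (Aatom n lam k ∩ Batom n lam k) := fun k =>
    lt_of_lt_of_le (m_pos hn hlam hb0 (2*k)) (measure_mono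
      (Set.subset_inter (shell_subset_Aatom hlam k) (shell_subset_Batom hlam k)))
  have posAB' : ∀ k, 0 < nuMeas n β (Aatom n lam (k+1) ∩ Batom n lam k) := fun k =>
    lt_of_lt_of_le (m_pos hn hlam hb0 (2*k+1)) (measure_mono
      (Set.subset_inter (shell_subset_Aatom_succ hlam k) (shell_subset_Batom' hlam k)))
  have hsub1 : (⋃ i ∈ I, Aatom n lam i) \ (⋃ j ∈ J, Batom n lam j) ⊆
      symmDiff (⋃ i ∈ I, Aatom n lam i) (⋃ j ∈ J, Batom n lam j) := by
    rw [Set.symmDiff_def]; exact Set.subset_union_left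
  have hsub2 : (⋃ j ∈ J, Batom n lam j) \ (⋃ i ∈ I, Aatom n lam i) ⊆
      symmDiff (⋃ i ∈ I, Aatom n lam i) (⋃ j ∈ J, Batom n lam j) := by
    rw [Set.symmDiff_def]; exact Set.subset_union_right
  have key : ∀ a b, 0 < nuMeas n β (Aatom n lam a ∩ Batom n lam b) → (a ∈ I ↔ b ∈ J) := by
    intro a b hpos
    constructor
    · intro haI
      by_contra hbJ
      have hsub : Aatom n lam a ∩ Batom n lam b ⊆
          (⋃ i ∈ I, Aatom n lam i) \ (⋃ j ∈ J, Batom n lam j) := by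
        rintro x ⟨hxA, hxB⟩
        refine ⟨Set.mem_biUnion haI hxA, fun hxT => ?_⟩
        obtain ⟨j, hjJ, hxj⟩ := Set.mem_iUnion₂.mp hxT
        have hne : j ≠ b := fun h => hbJ (h ▸ hjJ)
        exact Set.disjoint_left.mp (Batom_pairwise hlam hne) hxj hxB
      have h0 : nuMeas n β (Aatom n lam a ∩ Batom n lam b) = 0 :=
        le_antisymm ((measure_mono (hsub.trans hsub1)).trans (le_of_eq hnull)) zero_le
      exact absurd h0 hpos.ne'
    · intro hbJ
      by_contra haI
      have hsub : Aatom n lam a ∩ Batom n lam b ⊆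
          (⋃ j ∈ J, Batom n lam j) \ (⋃ i ∈ I, Aatom n lam i) := by
        rintro x ⟨hxA, hxB⟩
        refine ⟨Set.mem_biUnion hbJ hxB, fun hxS => ?_⟩
        obtain ⟨i, hiI, hxi⟩ := Set.mem_iUnion₂.mp hxS
        have hne : i ≠ a := fun h => haI (h ▸ hiI)
        exact Set.disjoint_left.mp (Aatom_pairwise hlam hne) hxi hxA
      have h0 : nuMeas n β (Aatom n lam a ∩ Batom n lam b) = 0 :=
        le_antisymm ((measure_mono (hsub.trans hsub2)).trans (le_of_eq hnull)) zero_le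
      exact absurd h0 hpos.ne'
  by_cases h0 : 0 ∈ I
  · right
    have hall : ∀ k, k ∈ I ∧ k ∈ J := by
      intro k
      induction k with
      | zero => exact ⟨h0, (key 0 0 (posAB 0)).mp h0⟩
      | succ k ih =>
        have hk1I : k+1 ∈ I := (key (k+1) k (posAB' k)).mpr ih.2
        exact ⟨hk1I, (key (k+1) (k+1) (posAB (k+1))).mp hk1I⟩
    have huniv : (⋃ i ∈ I, Aatom n lam i) = Set.univ := by
      rw [Set.eq_univ_iff_forall]
      intro x
      obtain ⟨i, hi⟩ := Set.mem_iUnion.mp ((Aatom_cover (n := n) hlam) ▸ Set.mem_univ x)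
      exact Set.mem_biUnion (hall i).1 hi
    rw [huniv, Set.compl_univ, measure_empty]
  · left
    have himp : ∀ k, k ∈ I → 0 ∈ I := by
      intro k
      induction k with
      | zero => exact id
      | succ k ih =>
        intro hk1
        exact ih ((key k k (posAB k)).mpr ((key (k+1) k (posAB' k)).mp hk1))
    have hempty : (⋃ i ∈ I, Aatom n lam i) = ∅ := by
      rw [Set.eq_empty_iff_forall_notMem]
      intro x hx
      obtain ⟨i, hiI, _⟩ := Set.mem_iUnion₂.mp hx
      exact h0 (himp i hiI)
    rw [hempty, measure_empty]

def PaDef (n : ℕ) (β lam : ℝ) (hn : 1 ≤ n) (hb : 100 * (n:ℝ) ^ ((3:ℝ)/2) ≤ β)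
    (hlam : 2 ≤ lam) : AtomicPartition (nuMeas n β) where
  ι := ℕ
  countable := inferInstance
  atom := Aatom n lam
  measurableSet := measurableSet_Aatom n lam
  disjoint := Aatom_pairwise hlam
  cover := Aatom_cover hlam
  pos := fun k => lt_of_lt_of_le (m_pos hn hlam (beta_pos hn hb).le (2*k))
    (measure_mono (shell_subset_Aatom hlam k))
  lt_top := fun k => (measure_mono (Aatom_subset_cubeQ k)).trans_lt
    (nuMeas_cubeQ_lt_top n β lam (2*k))

def PbDef (n : ℕ) (β lam : ℝ) (hn : 1 ≤ n) (hb : 100 * (n:ℝ) ^ ((3:ℝ)/2) ≤ β)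
    (hlam : 2 ≤ lam) : AtomicPartition (nuMeas n β) where
  ι := ℕ
  countable := inferInstance
  atom := Batom n lam
  measurableSet := measurableSet_Batom n lam
  disjoint := Batom_pairwise hlam
  cover := Batom_cover hlam
  pos := fun k => lt_of_lt_of_le (m_pos hn hlam (beta_pos hn hb).le (2*k))
    (measure_mono (shell_subset_Batom hlam k))
  lt_top := fun k => (measure_mono (Batom_subset_cubeQ k)).trans_lt
    (nuMeas_cubeQ_lt_top n β lam (2*k+1))

lemma rCard_le_two (hn : 1 ≤ n) (hb : 100 * (n:ℝ) ^ ((3:ℝ)/2) ≤ β) (hlam : 2 ≤ lam)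
    (j : ℕ) : rCard (nuMeas n β) (PaDef n β lam hn hb hlam) (PbDef n β lam hn hb hlam) j ≤ 2 := by
  have heq : rCard (nuMeas n β) (PaDef n β lam hn hb hlam) (PbDef n β lam hn hb hlam) j =
      ∑' _i : {i : ℕ // 0 < nuMeas n β (Aatom n lam i ∩ Batom n lam j)}, (1:ℝ≥0∞) := rfl
  rw [heq]
  apply rcard_aux
  intro i hi
  by_contra hcon
  push_neg at hcon
  cases i with
  | zero =>
    rw [A0B_empty hlam j (Ne.symm hcon.1), measure_empty] at hi
    exact absurd hi (lt_irrefl 0)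
  | succ i' =>
    rw [AB_empty hlam i' j (fun h => hcon.2 (by omega)) (Ne.symm hcon.1),
      measure_empty] at hi
    exact absurd hi (lt_irrefl 0)

lemma atomSum_le_half (hn : 1 ≤ n) (hb : 100 * (n:ℝ) ^ ((3:ℝ)/2) ≤ β) (hlam : 2 ≤ lam)
    (k : ℕ) :
    atomSum (nuMeas n β) (PaDef n β lam hn hb hlam) (PbDef n β lam hn hb hlam) (k+1) ≤
      ENNReal.ofReal (1/2) := by
  have hb0 : (0:ℝ) ≤ β := (beta_pos hn hb).le
  have heq : atomSum (nuMeas n β) (PaDef n β lam hn hb hlam) (PbDef n β lam hn hb hlam) (k+1) =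
      ∑' j : ℕ, rCard (nuMeas n β) (PaDef n β lam hn hb hlam) (PbDef n β lam hn hb hlam) j *
        nuMeas n β (Aatom n lam (k+1) ∩ Batom n lam j) ^ 2 /
        (nuMeas n β (Aatom n lam (k+1)) * nuMeas n β (Batom n lam j)) := rfl
  rw [heq, tsum_eq_sum (s := {k, k+1}) (by
    intro j hj
    simp only [Finset.mem_insert, Finset.mem_singleton] at hj
    push_neg at hj
    rw [AB_empty hlam k j hj.1 hj.2, measure_empty]
    simp), Finset.sum_pair (by omega : k ≠ k+1)]
  have hterm1 : rCard (nuMeas n β) (PaDef n β lam hn hb hlam) (PbDef n β lam hn hb hlam) k *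
      nuMeas n β (Aatom n lam (k+1) ∩ Batom n lam k) ^ 2 /
      (nuMeas n β (Aatom n lam (k+1)) * nuMeas n β (Batom n lam k)) ≤
      ENNReal.ofReal (1/4) := by
    have h1 := measure_mono (μ := nuMeas n β) (inter_subset_shell_left hlam k)
    have h2 := measure_mono (μ := nuMeas n β) (shell_subset_Aatom_succ hlam k)
    have h3 := measure_mono (μ := nuMeas n β) (shell_subset_Batom hlam k)
    have hm0 : nuMeas n β (shellS n lam (2*k+1)) ≠ 0 := (m_pos hn hlam hb0 (2*k+1)).ne'
    have hmt : nuMeas n β (shellS n lam (2*k+1)) ≠ ⊤ := m_ne_top (2*k+1)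
    have hratio := shell_ratio hn hb hlam (2*k)
    calc rCard (nuMeas n β) (PaDef n β lam hn hb hlam) (PbDef n β lam hn hb hlam) k *
        nuMeas n β (Aatom n lam (k+1) ∩ Batom n lam k) ^ 2 /
        (nuMeas n β (Aatom n lam (k+1)) * nuMeas n β (Batom n lam k))
        ≤ 2 * nuMeas n β (shellS n lam (2*k+1)) ^ 2 /
          (nuMeas n β (shellS n lam (2*k+1)) * nuMeas n β (shellS n lam (2*k))) := by
          apply ENNReal.div_le_div
          · exact mul_le_mul' (rCard_le_two hn hb hlam k)
              (by rw [sq, sq]; exact mul_le_mul' h1 h1)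
          · exact mul_le_mul' h2 h3
      _ = 2 * (nuMeas n β (shellS n lam (2*k+1)) / nuMeas n β (shellS n lam (2*k))) := by
          rw [mul_div_assoc, sq, ENNReal.mul_div_mul_left _ _ hm0 hmt]
      _ ≤ 2 * ENNReal.ofReal (1/8) :=
          mul_le_mul_right (ENNReal.div_le_of_le_mul hratio) _
      _ = ENNReal.ofReal (1/4) := by
          rw [show (2:ℝ≥0∞) = ENNReal.ofReal 2 by simp, ← ENNReal.ofReal_mul (by norm_num)]
          norm_num
  have hterm2 : rCard (nuMeas n β) (PaDef n β lam hn hb hlam) (PbDef n β lam hn hb hlam) (k+1) *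
      nuMeas n β (Aatom n lam (k+1) ∩ Batom n lam (k+1)) ^ 2 /
      (nuMeas n β (Aatom n lam (k+1)) * nuMeas n β (Batom n lam (k+1))) ≤
      ENNReal.ofReal (1/4) := by
    have h1 := measure_mono (μ := nuMeas n β) (inter_subset_shell_right hlam k)
    have h2 := measure_mono (μ := nuMeas n β) (shell_subset_Aatom_succ hlam k)
    have h3 := measure_mono (μ := nuMeas n β) (shell_subset_Batom hlam (k+1))
    rw [show 2*(k+1) = 2*k+2 from by omega] at h3
    have hm0 : nuMeas n β (shellS n lam (2*k+2)) ≠ 0 := (m_pos hn hlam hb0 (2*k+2)).ne'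
    have hmt : nuMeas n β (shellS n lam (2*k+2)) ≠ ⊤ := m_ne_top (2*k+2)
    have hratio := shell_ratio hn hb hlam (2*k+1)
    rw [show 2*k+1+1 = 2*k+2 from by omega] at hratio
    calc rCard (nuMeas n β) (PaDef n β lam hn hb hlam) (PbDef n β lam hn hb hlam) (k+1) *
        nuMeas n β (Aatom n lam (k+1) ∩ Batom n lam (k+1)) ^ 2 /
        (nuMeas n β (Aatom n lam (k+1)) * nuMeas n β (Batom n lam (k+1)))
        ≤ 2 * nuMeas n β (shellS n lam (2*k+2)) ^ 2 /
          (nuMeas n β (shellS n lam (2*k+1)) * nuMeas n β (shellS n lam (2*k+2))) := by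
          apply ENNReal.div_le_div
          · exact mul_le_mul' (rCard_le_two hn hb hlam (k+1))
              (by rw [sq, sq]; exact mul_le_mul' h1 h1)
          · exact mul_le_mul' h2 h3
      _ = 2 * (nuMeas n β (shellS n lam (2*k+2)) / nuMeas n β (shellS n lam (2*k+1))) := by
          rw [mul_div_assoc, sq,
            mul_comm (nuMeas n β (shellS n lam (2*k+1))) (nuMeas n β (shellS n lam (2*k+2))),
            ENNReal.mul_div_mul_left _ _ hm0 hmt]
      _ ≤ 2 * ENNReal.ofReal (1/8) :=
          mul_le_mul_right (ENNReal.div_le_of_le_mul hratio) _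
      _ = ENNReal.ofReal (1/4) := by
          rw [show (2:ℝ≥0∞) = ENNReal.ofReal 2 by simp, ← ENNReal.ofReal_mul (by norm_num)]
          norm_num
  calc _ ≤ ENNReal.ofReal (1/4) + ENNReal.ofReal (1/4) := add_le_add hterm1 hterm2
    _ = ENNReal.ofReal (1/2) := by
        rw [← ENNReal.ofReal_add (by norm_num) (by norm_num)]
        norm_num

end St15

/-- There is an absolute constant `C > 0` such that for all `n ≥ 1` and
`β ≥ C n^{3/2}` there is `λ₀ = λ₀(n,β) ≥ 1` so that for every `λ ≥ λ₀` the corona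
families `(A_s)_{s≥0}` and `(B_s)_{s≥0}` generate atomic σ-algebras which form an
admissible covering of `(ℝⁿ, ν_β)` with distinguished atoms `A_0, B_0`. -/
theorem statement15 :
    ∃ C : ℝ, 0 < C ∧ ∀ n : ℕ, 1 ≤ n → ∀ β : ℝ, C * (n : ℝ) ^ ((3 : ℝ) / 2) ≤ β →
      ∃ lam0 : ℝ, 1 ≤ lam0 ∧ ∀ lam : ℝ, lam0 ≤ lam →
        ∃ (Pa Pb : AtomicPartition (nuMeas n β)) (i0 : Pa.ι) (j0 : Pb.ι),
          Pa.atom i0 = Aatom n lam 0 ∧ Pb.atom j0 = Batom n lam 0 ∧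
          Set.range Pa.atom = Set.range (Aatom n lam) ∧
          Set.range Pb.atom = Set.range (Batom n lam) ∧
          IsAdmissibleCovering (nuMeas n β) Pa Pb (some i0) (some j0) := by
  refine ⟨100, by norm_num, ?_⟩
  intro n hn β hb
  refine ⟨2, by norm_num, ?_⟩
  intro lam hlam
  refine ⟨St15.PaDef n β lam hn hb hlam, St15.PbDef n β lam hn hb hlam, (0:ℕ), (0:ℕ),
    rfl, rfl, rfl, rfl, ?_, ?_, ?_, ?_⟩
  · exact St15.trivial_inter_main hn hb hlam
  · intro h
    exact absurd h (St15.nuMeas_univ_lt_top hn hb hlam).ne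
  · intro _
    exact ⟨rfl, rfl⟩
  · refine lt_of_le_of_lt (min_le_left _ _)
      (lt_of_le_of_lt (b := ENNReal.ofReal (1/2)) ?_ ?_)
    · apply iSup₂_le
      intro i hi
      have hi0 : i ≠ (0:ℕ) := fun h => hi (by rw [h])
      obtain ⟨k, rfl⟩ := Nat.exists_eq_succ_of_ne_zero hi0
      exact St15.atomSum_le_half hn hb hlam k
    · exact ENNReal.ofReal_lt_one.mpr (by norm_num)
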